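/- There exists a universal constant C > 0 such that for every 0 < μ ≤ L, every f ∈ S_{μ,L} with minimizer x⋆ and minimum f⋆, and every starting point x₀ ≠ x⋆, the solution X of the ODE Ẍ + (3/t)Ẋ + ∇f(X) = 0 with X(0) = x₀, Ẋ(0) = 0 satisfies f(X(T)) − f⋆ ≤ (1 − Cμ/L)(f(x₀) − f⋆), where T = T(x₀; f) is the speed restarting time. -/

import Mathlib

open Set Filter Topology

noncomputable section

abbrev E (n : ℕ) := EuclideanSpace ℝ (Fin n)

def MemFL (n : ℕ) (L : ℝ) (f : E n → ℝ) : Prop :=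
  ConvexOn ℝ Set.univ f ∧ ContDiff ℝ 1 f ∧
    ∀ x y, ‖gradient f x - gradient f y‖ ≤ L * ‖x - y‖

/-- The class `S_{μ,L}`: members of `F_L` such that `f(x) - μ‖x‖²/2` is convex. -/
def MemS (n : ℕ) (μ L : ℝ) (f : E n → ℝ) : Prop :=
  MemFL n L f ∧ ConvexOn ℝ Set.univ (fun x => f x - μ / 2 * ‖x‖ ^ 2)

def NesterovSol (n : ℕ) (f : E n → ℝ) (x0 : E n) (X : ℝ → E n) : Prop :=
  X 0 = x0 ∧
  ContDiffOn ℝ 1 X (Set.Ici 0) ∧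
  ContDiffOn ℝ 2 X (Set.Ioi 0) ∧
  derivWithin X (Set.Ici 0) 0 = 0 ∧
  ∀ t > (0:ℝ), deriv (deriv X) t + (3 / t) • deriv X t + gradient f (X t) = 0

/-- The speed restarting time of a trajectory `X`. -/
def SpeedRestartTime (n : ℕ) (X : ℝ → E n) : ℝ :=
  sSup {t : ℝ | 0 < t ∧ ∀ u ∈ Set.Ioo (0:ℝ) t, 0 < deriv (fun v => ‖deriv X v‖ ^ 2) u}

local notation "⟪" x ", " y "⟫" => @inner ℝ _ _ x y

lemma strong_first_order {n : ℕ} {μ : ℝ} {f : E n → ℝ}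
    (hdiff : ContDiff ℝ 1 f)
    (hconv : ConvexOn ℝ Set.univ (fun x => f x - μ / 2 * ‖x‖ ^ 2)) (x y : E n) :
    f x + ⟪gradient f x, y - x⟫ + μ/2 * ‖y - x‖^2 ≤ f y := by
  set h : E n → ℝ := fun z => f z - μ / 2 * ‖z‖ ^ 2 with hh
  set γ : ℝ → E n := fun τ => x + τ • (y - x) with hγ
  have h0 : γ 0 = x := by rw [hγ]; simp
  have h1 : γ 1 = y := by rw [hγ]; simp
  have hγd : ∀ τ : ℝ, HasDerivAt γ (y - x) τ := by
    intro τ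
    simpa only [one_smul] using ((hasDerivAt_id' τ).smul_const (y - x)).const_add x
  have hfd : HasGradientAt f (gradient f x) x :=
    ((hdiff.differentiable one_ne_zero) x).hasGradientAt
  have hfd' : HasFDerivAt f (InnerProductSpace.toDual ℝ (E n) (gradient f x)) (γ 0) := by
    rw [h0]; exact hfd
  have hcomp : HasDerivAt (fun τ => f (γ τ)) ⟪gradient f x, y - x⟫ 0 := by
    have := hfd'.comp_hasDerivAt (x := (0:ℝ)) (hγd 0)
    simp only [InnerProductSpace.toDual_apply_apply] at this
    exact this
  have hnsq : HasDerivAt (fun τ => ‖γ τ‖ ^ 2) (2 * ⟪x, y - x⟫) 0 := by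
    have := (hγd 0).norm_sq
    rw [h0] at this
    exact this
  have hφd : HasDerivAt (fun τ => h (γ τ))
      (⟪gradient f x, y - x⟫ - μ / 2 * (2 * ⟪x, y - x⟫)) 0 :=
    hcomp.sub ((hnsq.const_mul (μ/2)))
  have hφc : ConvexOn ℝ Set.univ (fun τ => h (γ τ)) := by
    have heq : (fun τ => h (γ τ)) = h ∘ (AffineMap.lineMap x y : ℝ →ᵃ[ℝ] E n) := by
      funext τ
      simp only [Function.comp_apply, AffineMap.lineMap_apply_module, hγ]
      congr 1
      module
    rw [heq]
    have := hconv.comp_affineMap (AffineMap.lineMap x y : ℝ →ᵃ[ℝ] E n)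
    simpa using this
  have hslope := hφc.le_slope_of_hasDerivAt (mem_univ (0:ℝ)) (mem_univ (1:ℝ)) zero_lt_one hφd
  rw [slope_def_field] at hslope
  rw [h0, h1] at hslope
  have hval : (h y - h x) / (1 - 0) = (f y - μ / 2 * ‖y‖ ^ 2) - (f x - μ / 2 * ‖x‖ ^ 2) := by
    rw [hh]; ring_nf
  rw [hval] at hslope
  have hexp : ‖y - x‖^2 = ‖y‖^2 - 2*⟪x,y⟫ + ‖x‖^2 := by
    rw [← real_inner_self_eq_norm_sq, ← real_inner_self_eq_norm_sq, ← real_inner_self_eq_norm_sq]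
    rw [inner_sub_left, inner_sub_right, inner_sub_right, real_inner_comm y x]
    ring
  have hexp2 : ⟪x, y - x⟫ = ⟪x,y⟫ - ‖x‖^2 := by
    rw [← real_inner_self_eq_norm_sq, inner_sub_right]
  rw [hexp2] at hslope
  rw [hexp]
  linarith [hslope]

lemma PL_ineq {n : ℕ} {μ : ℝ} {f : E n → ℝ} (hμ : 0 < μ)
    (hdiff : ContDiff ℝ 1 f)
    (hconv : ConvexOn ℝ Set.univ (fun x => f x - μ / 2 * ‖x‖ ^ 2))
    {xstar : E n} (hmin : IsMinOn f Set.univ xstar) (x0 : E n) :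
    2*μ*(f x0 - f xstar) ≤ ‖gradient f x0‖^2 := by
  have h := strong_first_order hdiff hconv x0 xstar
  have hC : -(‖gradient f x0‖ * ‖xstar - x0‖) ≤ ⟪gradient f x0, xstar - x0⟫ :=
    neg_le_of_abs_le (abs_real_inner_le_norm _ _)
  nlinarith [sq_nonneg (‖gradient f x0‖ - μ * ‖xstar - x0‖)]

lemma grad_ne_zero {n : ℕ} {μ : ℝ} {f : E n → ℝ} (hμ : 0 < μ)
    (hdiff : ContDiff ℝ 1 f)
    (hconv : ConvexOn ℝ Set.univ (fun x => f x - μ / 2 * ‖x‖ ^ 2))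
    {xstar : E n} (hmin : IsMinOn f Set.univ xstar) {x0 : E n} (hne : x0 ≠ xstar) :
    gradient f x0 ≠ 0 := by
  intro h0
  have h := strong_first_order hdiff hconv x0 xstar
  rw [h0] at h
  simp only [inner_zero_left] at h
  have hm : f xstar ≤ f x0 := hmin (mem_univ x0)
  have : ‖xstar - x0‖^2 ≤ 0 := by nlinarith
  have : xstar - x0 = 0 := by
    rw [← norm_eq_zero]; nlinarith [sq_nonneg ‖xstar - x0‖, norm_nonneg (xstar - x0)]
  exact hne (by rw [← sub_eq_zero, ← neg_sub]; simp [this]) 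

section Traj
variable {n : ℕ} {f : E n → ℝ} {x0 : E n} {X : ℝ → E n}

-- continuity of the extended velocity
lemma phi_cont (hX1 : ContDiffOn ℝ 1 X (Set.Ici 0)) :
    ContinuousOn (derivWithin X (Set.Ici 0)) (Set.Ici 0) :=
  hX1.continuousOn_derivWithin (uniqueDiffOn_Ici 0) le_rfl

lemma phi_eq (hX1 : ContDiffOn ℝ 1 X (Set.Ici 0)) {t : ℝ} (ht : 0 < t) :
    derivWithin X (Set.Ici 0) t = deriv X t :=
  derivWithin_of_mem_nhds (Ici_mem_nhds ht)

lemma X_hasDeriv (hX2 : ContDiffOn ℝ 2 X (Set.Ioi 0)) {t : ℝ} (ht : 0 < t) :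
    HasDerivAt X (deriv X t) t := by
  have : DifferentiableAt ℝ X t :=
    (hX2.differentiableOn (by norm_num)).differentiableAt (Ioi_mem_nhds ht)
  exact this.hasDerivAt

lemma derivX_contOn (hX2 : ContDiffOn ℝ 2 X (Set.Ioi 0)) :
    ContDiffOn ℝ 1 (deriv X) (Set.Ioi 0) :=
  hX2.deriv_of_isOpen isOpen_Ioi (by norm_num)

lemma derivX_hasDeriv (hX2 : ContDiffOn ℝ 2 X (Set.Ioi 0)) {t : ℝ} (ht : 0 < t) :
    HasDerivAt (deriv X) (deriv (deriv X) t) t := by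
  have : DifferentiableAt ℝ (deriv X) t :=
    ((derivX_contOn hX2).differentiableOn one_ne_zero).differentiableAt (Ioi_mem_nhds ht)
  exact this.hasDerivAt

lemma grad_cont (hf : ContDiff ℝ 1 f) : Continuous (gradient f) := by
  have h1 : Continuous (fderiv ℝ f) := hf.continuous_fderiv one_ne_zero
  exact ((InnerProductSpace.toDual ℝ (E n)).symm.continuous.comp h1 : _)

-- FTC for the trajectory
lemma X_ftc (hX1 : ContDiffOn ℝ 1 X (Set.Ici 0)) (hX2 : ContDiffOn ℝ 2 X (Set.Ioi 0))
    {t : ℝ} (ht : 0 ≤ t) :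
    X t - X 0 = ∫ u in (0:ℝ)..t, derivWithin X (Set.Ici 0) u := by
  rw [eq_comm]
  apply intervalIntegral.integral_eq_sub_of_hasDeriv_right_of_le ht
  · exact (hX1.continuousOn).mono (by intro u hu; exact hu.1)
  · intro u hu
    exact ((X_hasDeriv hX2 hu.1).congr_deriv (phi_eq hX1 hu.1).symm).hasDerivWithinAt
  · exact ((phi_cont hX1).mono (by intro u hu; exact hu.1)).intervalIntegrable_of_Icc ht
end Traj

section Traj2
variable {n : ℕ} {f : E n → ℝ} {x0 : E n} {X : ℝ → E n}

/-- Integral representation: `t³ Ẋ(t) = -∫₀ᵗ u³ ∇f(X u) du`. -/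
lemma vel_rep (hf : ContDiff ℝ 1 f) (hX1 : ContDiffOn ℝ 1 X (Set.Ici 0))
    (hX2 : ContDiffOn ℝ 2 X (Set.Ioi 0)) (hXd0 : derivWithin X (Set.Ici 0) 0 = 0)
    (hODE : ∀ t > (0:ℝ), deriv (deriv X) t + (3 / t) • deriv X t + gradient f (X t) = 0)
    {t : ℝ} (ht : 0 < t) :
    t^3 • deriv X t = - ∫ u in (0:ℝ)..t, u^3 • gradient f (X u) := by
  have key : ∫ u in (0:ℝ)..t, -(u^3 • gradient f (X u)) =
      (fun u => u^3 • derivWithin X (Set.Ici 0) u) t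
      - (fun u => u^3 • derivWithin X (Set.Ici 0) u) 0 := by
    apply intervalIntegral.integral_eq_sub_of_hasDeriv_right_of_le ht.le
    · apply ContinuousOn.fun_smul
      · exact (continuous_pow 3).continuousOn
      · exact (phi_cont hX1).mono (fun u hu => hu.1)
    · intro u hu
      have hu0 : 0 < u := hu.1
      -- the function agrees with u ↦ u³ • deriv X u near u
      have hev : (fun v => v^3 • derivWithin X (Set.Ici 0) v) =ᶠ[𝓝 u]
          (fun v => v^3 • deriv X v) := by
        filter_upwards [Ioi_mem_nhds hu0] with v hv
        rw [phi_eq hX1 hv]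
      have hd : HasDerivAt (fun v => v^3 • deriv X v)
          ((3*u^2) • deriv X u + u^3 • deriv (deriv X) u) u := by
        have h1 : HasDerivAt (fun v : ℝ => v^3) (3*u^2) u := by
          simpa using (hasDerivAt_pow 3 u)
        have := h1.smul (derivX_hasDeriv hX2 hu0)
        rwa [add_comm] at this
      have heq : (3*u^2) • deriv X u + u^3 • deriv (deriv X) u
          = -(u^3 • gradient f (X u)) := by
        have h2 := hODE u hu0
        have h3 : deriv (deriv X) u = -((3/u) • deriv X u) - gradient f (X u) := by
          rw [eq_sub_iff_add_eq, eq_neg_iff_add_eq_zero]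
          simpa [add_assoc, add_comm ((3/u) • deriv X u)] using h2
        rw [h3, smul_sub, smul_neg, smul_smul]
        rw [show u^3 * (3/u) = 3*u^2 by field_simp]
        abel
      have hd2 : HasDerivAt (fun v => v^3 • derivWithin X (Set.Ici 0) v)
          ((3*u^2) • deriv X u + u^3 • deriv (deriv X) u) u :=
        hd.congr_of_eventuallyEq hev
      rw [heq] at hd2
      exact hd2.hasDerivWithinAt
    · apply ContinuousOn.intervalIntegrable_of_Icc ht.le
      apply ContinuousOn.neg
      apply ContinuousOn.smul (continuous_pow 3).continuousOn
      exact ((grad_cont hf).comp_continuousOn ((hX1.continuousOn).mono (fun u hu => hu.1)))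
  rw [intervalIntegral.integral_neg] at key
  simp only [hXd0, smul_zero] at key
  rw [phi_eq hX1 ht] at key
  have : t ^ 3 • deriv X t - 0 = t^3 • deriv X t := by abel
  rw [this] at key
  rw [← key]
end Traj2

section Traj3
variable {n : ℕ} {f : E n → ℝ} {x0 : E n} {X : ℝ → E n} {L : ℝ}

lemma apriori (hf : ContDiff ℝ 1 f)
    (hLip : ∀ x y, ‖gradient f x - gradient f y‖ ≤ L * ‖x - y‖)
    (hX0 : X 0 = x0) (hX1 : ContDiffOn ℝ 1 X (Set.Ici 0))
    (hX2 : ContDiffOn ℝ 2 X (Set.Ioi 0)) (hXd0 : derivWithin X (Set.Ici 0) 0 = 0)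
    (hODE : ∀ t > (0:ℝ), deriv (deriv X) t + (3 / t) • deriv X t + gradient f (X t) = 0)
    (hL : 0 ≤ L) {t : ℝ} (ht : 0 < t) (hκ : L * t^2 ≤ 1) :
    ∀ u ∈ Set.Icc (0:ℝ) t, ‖X u - x0‖ ≤ t^2 * ‖gradient f x0‖ / 7 := by
  set G := ‖gradient f x0‖ with hG
  have hG0 : 0 ≤ G := norm_nonneg _
  have hXc : ContinuousOn X (Set.Ici 0) := hX1.continuousOn
  have hψc : ContinuousOn (fun u => ‖X u - x0‖) (Set.Icc 0 t) :=
    ((hXc.mono (fun u hu => hu.1)).sub continuousOn_const).norm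
  obtain ⟨us, hus, hmax⟩ := isCompact_Icc.exists_isMaxOn (Set.nonempty_Icc.2 ht.le) hψc
  set M := ‖X us - x0‖ with hM
  have hM0 : 0 ≤ M := norm_nonneg _
  have hmax' : ∀ u ∈ Set.Icc (0:ℝ) t, ‖X u - x0‖ ≤ M := fun u hu => hmax hu
  -- gradient bound along the trajectory
  have hgb : ∀ u ∈ Set.Icc (0:ℝ) t, ‖gradient f (X u)‖ ≤ G + L * M := by
    intro u hu
    have h1 : ‖gradient f (X u) - gradient f x0‖ ≤ L * ‖X u - x0‖ := hLip _ _
    have h2 : ‖X u - x0‖ ≤ M := hmax' u hu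
    have h3 : ‖gradient f (X u)‖ ≤ ‖gradient f x0‖ + ‖gradient f (X u) - gradient f x0‖ := by
      have := norm_add_le (gradient f x0) (gradient f (X u) - gradient f x0)
      simpa using this
    have h4 : L * ‖X u - x0‖ ≤ L * M := mul_le_mul_of_nonneg_left h2 hL
    linarith
  -- velocity bound
  have hvb : ∀ s ∈ Set.Ioc (0:ℝ) t, ‖deriv X s‖ ≤ s/4 * (G + L*M) := by
    intro s hs
    have hs0 : 0 < s := hs.1
    have hrep := vel_rep hf hX1 hX2 hXd0 hODE hs0
    have h1 : s^3 * ‖deriv X s‖ = ‖∫ u in (0:ℝ)..s, u^3 • gradient f (X u)‖ := by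
      rw [← norm_neg (∫ u in (0:ℝ)..s, u^3 • gradient f (X u)), ← hrep, norm_smul]
      rw [Real.norm_eq_abs, abs_of_pos (pow_pos hs0 3)]
    have hint1 : IntervalIntegrable (fun u => ‖u^3 • gradient f (X u)‖) MeasureTheory.volume 0 s := by
      apply ContinuousOn.intervalIntegrable_of_Icc hs0.le
      apply ContinuousOn.norm
      exact ContinuousOn.smul (continuous_pow 3).continuousOn
        ((grad_cont hf).comp_continuousOn (hXc.mono (fun u hu => hu.1)))
    have hint2 : IntervalIntegrable (fun u => u^3 * (G + L*M)) MeasureTheory.volume 0 s := by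
      apply ContinuousOn.intervalIntegrable_of_Icc hs0.le
      exact (continuousOn_pow 3).mul continuousOn_const
    have h2 : ‖∫ u in (0:ℝ)..s, u^3 • gradient f (X u)‖
        ≤ ∫ u in (0:ℝ)..s, u^3 * (G + L*M) := by
      refine (intervalIntegral.norm_integral_le_integral_norm hs0.le).trans ?_
      apply intervalIntegral.integral_mono_on hs0.le hint1 hint2
      intro u hu
      rw [norm_smul]
      have hu3 : |u^3| = u^3 := abs_of_nonneg (pow_nonneg hu.1 3)
      rw [Real.norm_eq_abs, hu3]
      exact mul_le_mul_of_nonneg_left (hgb u ⟨hu.1, hu.2.trans hs.2⟩) (pow_nonneg hu.1 3)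
    have h3 : ∫ u in (0:ℝ)..s, u^3 * (G + L*M) = s^4/4 * (G + L*M) := by
      rw [intervalIntegral.integral_mul_const, integral_pow]
      norm_num
    have h4 : s^3 * ‖deriv X s‖ ≤ s^4/4 * (G + L*M) := by
      rw [h1]; rw [← h3]; exact h2
    have hs3 : 0 < s^3 := pow_pos hs0 3
    rw [show s/4 * (G + L*M) = (s^4/4 * (G+L*M))/s^3 by field_simp]
    rw [le_div_iff₀ hs3]
    linarith [h4]
  -- bound on M
  have hMb : M ≤ t^2/8 * (G + L*M) := by
    have hus0 : 0 ≤ us := hus.1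
    have hftc := X_ftc hX1 hX2 hus0
    rw [hX0] at hftc
    have h1 : M = ‖∫ u in (0:ℝ)..us, derivWithin X (Set.Ici 0) u‖ := by rw [hM, hftc]
    have hφc' : ContinuousOn (fun u => ‖derivWithin X (Set.Ici 0) u‖) (Set.Icc 0 us) :=
      ((phi_cont hX1).mono (fun u hu => hu.1)).norm
    have hint1 : IntervalIntegrable (fun u => ‖derivWithin X (Set.Ici 0) u‖)
        MeasureTheory.volume 0 us := hφc'.intervalIntegrable_of_Icc hus0
    have hint2 : IntervalIntegrable (fun u => u/4 * (G + L*M)) MeasureTheory.volume 0 us := by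
      apply ContinuousOn.intervalIntegrable_of_Icc hus0
      fun_prop
    have h2 : ‖∫ u in (0:ℝ)..us, derivWithin X (Set.Ici 0) u‖
        ≤ ∫ u in (0:ℝ)..us, u/4 * (G + L*M) := by
      refine (intervalIntegral.norm_integral_le_integral_norm hus0).trans ?_
      apply intervalIntegral.integral_mono_on hus0 hint1 hint2
      intro u hu
      rcases eq_or_lt_of_le hu.1 with h|h
      · rw [← h, hXd0]
        simp
      · rw [phi_eq hX1 h]
        exact hvb u ⟨h, hu.2.trans hus.2⟩
    have h3 : ∫ u in (0:ℝ)..us, u/4 * (G + L*M) = us^2/8 * (G + L*M) := by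
      have : ∀ u : ℝ, u/4 * (G + L*M) = (G+L*M)/4 * u := fun u => by ring
      simp only [this]
      rw [intervalIntegral.integral_const_mul, integral_id]
      ring
    have h4 : us^2/8 * (G + L*M) ≤ t^2/8 * (G + L*M) := by
      apply mul_le_mul_of_nonneg_right _ (by positivity)
      have : us^2 ≤ t^2 := by nlinarith [hus.2, hus.1]
      linarith
    calc M = ‖∫ u in (0:ℝ)..us, derivWithin X (Set.Ici 0) u‖ := h1
    _ ≤ ∫ u in (0:ℝ)..us, u/4 * (G + L*M) := h2
    _ = us^2/8 * (G + L*M) := h3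
    _ ≤ t^2/8 * (G + L*M) := h4
  -- solve
  have hMfin : M ≤ t^2 * G / 7 := by
    have h5 : L * t^2 * M ≤ 1 * M := mul_le_mul_of_nonneg_right hκ hM0
    nlinarith [hMb]
  intro u hu
  exact (hmax' u hu).trans hMfin

end Traj3

section Traj4
variable {n : ℕ} {f : E n → ℝ} {x0 : E n} {X : ℝ → E n} {L : ℝ}

lemma dev_bound (hf : ContDiff ℝ 1 f)
    (hLip : ∀ x y, ‖gradient f x - gradient f y‖ ≤ L * ‖x - y‖)
    (hX0 : X 0 = x0) (hX1 : ContDiffOn ℝ 1 X (Set.Ici 0))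
    (hX2 : ContDiffOn ℝ 2 X (Set.Ioi 0)) (hXd0 : derivWithin X (Set.Ici 0) 0 = 0)
    (hODE : ∀ t > (0:ℝ), deriv (deriv X) t + (3 / t) • deriv X t + gradient f (X t) = 0)
    (hL : 0 ≤ L) {t : ℝ} (ht : 0 < t) (hκ : L * t^2 ≤ 1) :
    ‖deriv X t + (t/4) • gradient f x0‖ ≤ t/4 * (L * t^2 * ‖gradient f x0‖ / 7) := by
  set G := ‖gradient f x0‖ with hG
  set a := gradient f x0 with ha
  have hap := apriori hf hLip hX0 hX1 hX2 hXd0 hODE hL ht hκ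
  have hrep := vel_rep hf hX1 hX2 hXd0 hODE ht
  have hgc : ContinuousOn (fun u => gradient f (X u)) (Set.Icc 0 t) :=
    (grad_cont hf).comp_continuousOn ((hX1.continuousOn).mono (fun u hu => hu.1))
  have hint1 : IntervalIntegrable (fun u => u^3 • gradient f (X u)) MeasureTheory.volume 0 t :=
    (ContinuousOn.smul (continuous_pow 3).continuousOn hgc).intervalIntegrable_of_Icc ht.le
  have hint2 : IntervalIntegrable (fun u : ℝ => u^3 • a) MeasureTheory.volume 0 t :=
    (ContinuousOn.smul (continuous_pow 3).continuousOn continuousOn_const).intervalIntegrable_of_Icc ht.le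
  have hintconst : (∫ u in (0:ℝ)..t, u^3 • a) = (t^4/4) • a := by
    rw [intervalIntegral.integral_smul_const, integral_pow]
    norm_num
  have key : t^3 • (deriv X t + (t/4) • a)
      = - ∫ u in (0:ℝ)..t, u^3 • (gradient f (X u) - a) := by
    have h1 : (∫ u in (0:ℝ)..t, u^3 • (gradient f (X u) - a))
        = (∫ u in (0:ℝ)..t, u^3 • gradient f (X u)) - ∫ u in (0:ℝ)..t, u^3 • a := by
      rw [← intervalIntegral.integral_sub hint1 hint2]
      congr 1; funext u; rw [smul_sub]
    rw [h1, hintconst, smul_add, hrep, smul_smul]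
    rw [show t^3 * (t/4) = t^4/4 by ring]
    abel
  have hnorm : t^3 * ‖deriv X t + (t/4) • a‖
      ≤ ∫ u in (0:ℝ)..t, u^3 * (L * t^2 * G / 7) := by
    have h2 : t^3 * ‖deriv X t + (t/4) • a‖ = ‖t^3 • (deriv X t + (t/4) • a)‖ := by
      rw [norm_smul, Real.norm_eq_abs, abs_of_pos (pow_pos ht 3)]
    rw [h2, key, norm_neg]
    refine (intervalIntegral.norm_integral_le_integral_norm ht.le).trans ?_
    apply intervalIntegral.integral_mono_on ht.le _ _
    · intro u hu
      rw [norm_smul, Real.norm_eq_abs, abs_of_nonneg (pow_nonneg hu.1 3)]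
      apply mul_le_mul_of_nonneg_left _ (pow_nonneg hu.1 3)
      calc ‖gradient f (X u) - a‖ ≤ L * ‖X u - x0‖ := hLip _ _
      _ ≤ L * (t^2 * G / 7) := mul_le_mul_of_nonneg_left (hap u hu) hL
      _ = L * t^2 * G / 7 := by ring
    · exact (ContinuousOn.norm (ContinuousOn.smul (continuous_pow 3).continuousOn
        (hgc.sub continuousOn_const))).intervalIntegrable_of_Icc ht.le
    · exact ((continuousOn_pow 3).mul continuousOn_const).intervalIntegrable_of_Icc ht.le
  have h3 : ∫ u in (0:ℝ)..t, u^3 * (L * t^2 * G / 7) = t^4/4 * (L * t^2 * G / 7) := by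
    rw [intervalIntegral.integral_mul_const, integral_pow]
    norm_num
  rw [h3] at hnorm
  have ht3 : 0 < t^3 := pow_pos ht 3
  rw [show t/4 * (L * t^2 * G / 7) = (t^4/4 * (L * t^2 * G / 7))/t^3 by field_simp]
  rw [le_div_iff₀ ht3]
  linarith [hnorm]

end Traj4

section Traj5
variable {n : ℕ} {f : E n → ℝ} {x0 : E n} {X : ℝ → E n} {L : ℝ}

lemma speed_hasDeriv (hX2 : ContDiffOn ℝ 2 X (Set.Ioi 0)) {t : ℝ} (ht : 0 < t) :
    HasDerivAt (fun v => ‖deriv X v‖ ^ 2) (2*⟪deriv X t, deriv (deriv X) t⟫) t :=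
  (derivX_hasDeriv hX2 ht).norm_sq

lemma fX_hasDeriv (hf : ContDiff ℝ 1 f) (hX2 : ContDiffOn ℝ 2 X (Set.Ioi 0))
    {t : ℝ} (ht : 0 < t) :
    HasDerivAt (fun s => f (X s)) ⟪gradient f (X t), deriv X t⟫ t := by
  have hfd : HasFDerivAt f (InnerProductSpace.toDual ℝ (E n) (gradient f (X t))) (X t) :=
    ((hf.differentiable one_ne_zero) (X t)).hasGradientAt
  have := hfd.comp_hasDerivAt t (X_hasDeriv hX2 ht)
  simp only [InnerProductSpace.toDual_apply_apply] at this
  exact this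

set_option maxHeartbeats 1000000 in
/-- Key inner product bound: `⟨∇f(X t), Ẋ(t)⟩ ≤ -(t/5)‖∇f(x₀)‖²`. -/
lemma inner_bound (hf : ContDiff ℝ 1 f)
    (hLip : ∀ x y, ‖gradient f x - gradient f y‖ ≤ L * ‖x - y‖)
    (hX0 : X 0 = x0) (hX1 : ContDiffOn ℝ 1 X (Set.Ici 0))
    (hX2 : ContDiffOn ℝ 2 X (Set.Ioi 0)) (hXd0 : derivWithin X (Set.Ici 0) 0 = 0)
    (hODE : ∀ t > (0:ℝ), deriv (deriv X) t + (3 / t) • deriv X t + gradient f (X t) = 0)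
    (hL : 0 ≤ L) {t : ℝ} (ht : 0 < t) (hκ : L * t^2 ≤ 1/9) :
    ⟪gradient f (X t), deriv X t⟫ ≤ -(t/5) * ‖gradient f x0‖^2 := by
  set G := ‖gradient f x0‖ with hG
  set a := gradient f x0 with ha
  set v := deriv X t with hv
  set κ := L * t^2 with hκdef
  have hκ1 : κ ≤ 1 := by rw [hκdef]; linarith
  have hκ0 : 0 ≤ κ := by rw [hκdef]; positivity
  have hG0 : 0 ≤ G := norm_nonneg _
  set e := v + (t/4) • a with he
  set d := gradient f (X t) - a with hd
  have hvv : v = e - (t/4) • a := by rw [he]; abel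
  have hgg : gradient f (X t) = a + d := by rw [hd]; abel
  have hne : ‖e‖ ≤ t/4 * (κ * G / 7) := by
    have := dev_bound hf hLip hX0 hX1 hX2 hXd0 hODE hL ht hκ1
    rw [← hG, ← ha, ← hv, ← he] at this
    calc ‖e‖ ≤ t/4 * (L * t^2 * G / 7) := this
    _ = t/4 * (κ * G / 7) := by rw [hκdef]
  have hnd : ‖d‖ ≤ κ * G / 7 := by
    have hap := apriori hf hLip hX0 hX1 hX2 hXd0 hODE hL ht hκ1 t ⟨ht.le, le_refl t⟩
    calc ‖d‖ ≤ L * ‖X t - x0‖ := hLip _ _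
    _ ≤ L * (t^2 * G / 7) := mul_le_mul_of_nonneg_left hap hL
    _ = κ * G / 7 := by rw [hκdef]; ring
  have hcomm : ⟪d,a⟫ = ⟪a,d⟫ := (real_inner_comm d a).symm
  have hexp : ⟪gradient f (X t), v⟫ = ⟪a,e⟫ + ⟪d,e⟫ - (t/4)*(‖a‖^2 + ⟪d,a⟫) := by
    rw [hgg, hvv, inner_add_left, inner_sub_right, inner_sub_right, inner_smul_right,
      inner_smul_right, real_inner_self_eq_norm_sq, hcomm]
    ring
  have h1 : ⟪a,e⟫ ≤ G * ‖e‖ := real_inner_le_norm a e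
  have h2 : ⟪d,e⟫ ≤ ‖d‖ * ‖e‖ := real_inner_le_norm d e
  have h3 : -⟪d,a⟫ ≤ ‖d‖ * G := by
    have := abs_real_inner_le_norm d a
    rw [abs_le] at this
    linarith [this.1]
  have hnd0 : 0 ≤ ‖d‖ := norm_nonneg _
  have hne0 : 0 ≤ ‖e‖ := norm_nonneg _
  rw [hexp, ← hG]
  have key1 : ⟪a,e⟫ ≤ t/4 * (κ * G / 7) * G := by nlinarith [mul_le_mul_of_nonneg_left hne hG0]
  have key2 : ⟪d,e⟫ ≤ (κ * G / 7) * (t/4 * (κ * G / 7)) :=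
    h2.trans (mul_le_mul hnd hne hne0 (by positivity))
  have key3 : (t/4) * (-⟪d,a⟫) ≤ t/4 * (κ * G / 7 * G) := by
    have : -⟪d,a⟫ ≤ κ * G / 7 * G := h3.trans (by nlinarith [mul_le_mul_of_nonneg_right hnd hG0])
    nlinarith
  have hκt : κ * (t * G^2) ≤ (1/9) * (t * G^2) :=
    mul_le_mul_of_nonneg_right hκ (by positivity)
  have hκκt : κ * (κ * (t * G^2)) ≤ (1/9) * ((1/9) * (t * G^2)) := by
    nlinarith [mul_nonneg hκ0 (mul_nonneg ht.le (sq_nonneg G))]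
  nlinarith [mul_nonneg ht.le (sq_nonneg G), key1, key2, key3, hκt, hκκt]

set_option maxHeartbeats 1000000 in
/-- Positivity of the derivative of the speed. -/
lemma speed_deriv_pos (hf : ContDiff ℝ 1 f)
    (hLip : ∀ x y, ‖gradient f x - gradient f y‖ ≤ L * ‖x - y‖)
    (hX0 : X 0 = x0) (hX1 : ContDiffOn ℝ 1 X (Set.Ici 0))
    (hX2 : ContDiffOn ℝ 2 X (Set.Ioi 0)) (hXd0 : derivWithin X (Set.Ici 0) 0 = 0)
    (hODE : ∀ t > (0:ℝ), deriv (deriv X) t + (3 / t) • deriv X t + gradient f (X t) = 0)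
    (hL : 0 ≤ L) (hGpos : gradient f x0 ≠ 0) {t : ℝ} (ht : 0 < t) (hκ : L * t^2 ≤ 1/9) :
    0 < deriv (fun v => ‖deriv X v‖ ^ 2) t := by
  set G := ‖gradient f x0‖ with hG
  set a := gradient f x0 with ha
  set v := deriv X t with hv
  set κ := L * t^2 with hκdef
  have hκ1 : κ ≤ 1 := by rw [hκdef]; linarith
  have hκ0 : 0 ≤ κ := by rw [hκdef]; positivity
  have hGpos' : 0 < G := by rw [hG]; exact norm_pos_iff.2 hGpos
  have hderiv : deriv (fun v => ‖deriv X v‖ ^ 2) t = 2*⟪v, deriv (deriv X) t⟫ :=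
    (speed_hasDeriv hX2 ht).deriv
  have hODEt : deriv (deriv X) t = -((3/t) • v) - gradient f (X t) := by
    have h2 := hODE t ht
    rw [eq_sub_iff_add_eq, eq_neg_iff_add_eq_zero]
    rw [← hv] at h2
    rw [add_right_comm] at h2
    exact h2
  have hip := inner_bound hf hLip hX0 hX1 hX2 hXd0 hODE hL ht hκ
  rw [← hG, ← hv] at hip
  have hexp : deriv (fun v => ‖deriv X v‖ ^ 2) t
      = -(6/t) * ‖v‖^2 - 2*⟪gradient f (X t), v⟫ := by
    rw [hderiv, hODEt]
    rw [inner_sub_right, inner_neg_right, inner_smul_right, real_inner_self_eq_norm_sq,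
      real_inner_comm]
    ring
  -- bound on ‖v‖
  have hnv : ‖v‖ ≤ t/4 * G + t/4 * (κ * G / 7) := by
    have hdev := dev_bound hf hLip hX0 hX1 hX2 hXd0 hODE hL ht hκ1
    rw [← hG, ← ha, ← hv] at hdev
    have : ‖v‖ ≤ ‖v + (t/4) • a‖ + ‖(t/4) • a‖ := by
      have := norm_add_le (v + (t/4) • a) (-((t/4) • a))
      simpa using this
    have hna : ‖(t/4) • a‖ = t/4 * G := by
      rw [norm_smul, Real.norm_eq_abs, abs_of_pos (by linarith : (0:ℝ) < t/4), hG]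
    rw [hκdef]
    linarith
  have hnv0 : 0 ≤ ‖v‖ := norm_nonneg _
  rw [hexp]
  have htinv : 0 < 6/t := by positivity
  have hsq : ‖v‖^2 ≤ (t/4 * G + t/4 * (κ * G / 7))^2 := by nlinarith
  have hb1 : -(6/t) * ‖v‖^2 ≥ -(6/t) * (t/4 * G + t/4 * (κ * G / 7))^2 := by nlinarith
  have hb2 : -(6/t) * (t/4 * G + t/4 * (κ * G / 7))^2 = -6*t*(1/4 + κ/28)^2 * G^2 := by
    field_simp
    ring
  have hmain : -(6/t) * ‖v‖^2 ≥ -6*t*(1/4 + κ/28)^2 * G^2 := hb2 ▸ hb1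
  have hcoef : 6*(1/4 + κ/28)^2 < 2/5 := by nlinarith [hκ, hκ0]
  have hpos : 0 < t*G^2*(2/5 - 6*(1/4+κ/28)^2) := by
    have : 0 < t*G^2 := by positivity
    nlinarith
  nlinarith [hmain, hip, hpos]

end Traj5

section Traj6
variable {n : ℕ} {f : E n → ℝ} {x0 : E n} {X : ℝ → E n} {L : ℝ}

lemma f_decrease (hf : ContDiff ℝ 1 f)
    (hLip : ∀ x y, ‖gradient f x - gradient f y‖ ≤ L * ‖x - y‖)
    (hX0 : X 0 = x0) (hX1 : ContDiffOn ℝ 1 X (Set.Ici 0))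
    (hX2 : ContDiffOn ℝ 2 X (Set.Ioi 0)) (hXd0 : derivWithin X (Set.Ici 0) 0 = 0)
    (hODE : ∀ t > (0:ℝ), deriv (deriv X) t + (3 / t) • deriv X t + gradient f (X t) = 0)
    (hL : 0 ≤ L) {t0 : ℝ} (ht0 : 0 < t0) (hκ : L * t0^2 ≤ 1/9) :
    f (X t0) - f x0 ≤ -(t0^2/10) * ‖gradient f x0‖^2 := by
  set G := ‖gradient f x0‖ with hG
  set D : ℝ → ℝ := fun s => ⟪gradient f (X s), derivWithin X (Set.Ici 0) s⟫ with hD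
  have hXc : ContinuousOn X (Set.Ici 0) := hX1.continuousOn
  have hDc : ContinuousOn D (Set.Icc 0 t0) := by
    apply ContinuousOn.inner
    · exact (grad_cont hf).comp_continuousOn (hXc.mono (fun u hu => hu.1))
    · exact (phi_cont hX1).mono (fun u hu => hu.1)
  have hftc : f (X t0) - f (X 0) = ∫ s in (0:ℝ)..t0, D s := by
    rw [eq_comm]
    apply intervalIntegral.integral_eq_sub_of_hasDeriv_right_of_le ht0.le
    · exact (hf.continuous.comp_continuousOn (hXc.mono (fun u hu => hu.1)))
    · intro s hs
      have h1 := fX_hasDeriv hf hX2 hs.1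
      have h2 : D s = ⟪gradient f (X s), deriv X s⟫ := by
        simp only [hD]; rw [phi_eq hX1 hs.1]
      rw [h2]
      exact h1.hasDerivWithinAt
    · exact hDc.intervalIntegrable_of_Icc ht0.le
  have hmono : ∫ s in (0:ℝ)..t0, D s ≤ ∫ s in (0:ℝ)..t0, -(s/5) * G^2 := by
    apply intervalIntegral.integral_mono_on ht0.le (hDc.intervalIntegrable_of_Icc ht0.le)
    · apply ContinuousOn.intervalIntegrable_of_Icc ht0.le
      fun_prop
    · intro s hs
      rcases eq_or_lt_of_le hs.1 with h|h
      · have hD0 : D 0 = 0 := by simp only [hD]; rw [hXd0]; simp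
        rw [← h, hD0]
        simp
      · have hsq : s^2 ≤ t0^2 := pow_le_pow_left₀ hs.1 hs.2 2
        have hκs : L * s^2 ≤ 1/9 := by nlinarith [mul_le_mul_of_nonneg_left hsq hL]
        have hib := inner_bound hf hLip hX0 hX1 hX2 hXd0 hODE hL h hκs
        have h2 : D s = ⟪gradient f (X s), deriv X s⟫ := by
          simp only [hD]; rw [phi_eq hX1 h]
        rw [h2]; exact hib
  have hval : ∫ s in (0:ℝ)..t0, -(s/5) * G^2 = -(t0^2/10) * G^2 := by
    have : ∀ s : ℝ, -(s/5) * G^2 = (-(G^2)/5) * s := fun s => by ring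
    simp only [this]
    rw [intervalIntegral.integral_const_mul, integral_id]
    ring
  rw [hX0] at hftc
  linarith [hftc, hmono, hval.le, hval.ge]

end Traj6


section T
variable {n : ℕ} {f : E n → ℝ} {x0 : E n} {X : ℝ → E n} {L : ℝ}

lemma energy_hasDeriv (hf : ContDiff ℝ 1 f) (hX2 : ContDiffOn ℝ 2 X (Set.Ioi 0))
    (hODE : ∀ t > (0:ℝ), deriv (deriv X) t + (3 / t) • deriv X t + gradient f (X t) = 0)
    {t : ℝ} (ht : 0 < t) :
    HasDerivAt (fun s => f (X s) + (1/2) * ‖deriv X s‖^2) (-(3/t) * ‖deriv X t‖^2) t := by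
  have h1 := fX_hasDeriv hf hX2 ht
  have h2 := (speed_hasDeriv hX2 ht).const_mul (1/2:ℝ)
  have h3 := h1.add h2
  refine h3.congr_deriv ?_
  have hODEt : deriv (deriv X) t = -((3/t) • deriv X t) - gradient f (X t) := by
    have h4 := hODE t ht
    rw [eq_sub_iff_add_eq, eq_neg_iff_add_eq_zero, add_right_comm]
    exact h4
  rw [hODEt, inner_sub_right, inner_neg_right, inner_smul_right, real_inner_self_eq_norm_sq,
    real_inner_comm]
  ring

lemma S_bddAbove (hf : ContDiff ℝ 1 f)
    (hX1 : ContDiffOn ℝ 1 X (Set.Ici 0))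
    (hX2 : ContDiffOn ℝ 2 X (Set.Ioi 0))
    (hODE : ∀ t > (0:ℝ), deriv (deriv X) t + (3 / t) • deriv X t + gradient f (X t) = 0)
    {xstar : E n} (hmin : IsMinOn f Set.univ xstar) :
    BddAbove {t : ℝ | 0 < t ∧ ∀ u ∈ Set.Ioo (0:ℝ) t, 0 < deriv (fun v => ‖deriv X v‖ ^ 2) u} := by
  by_contra hbdd
  rw [not_bddAbove_iff] at hbdd
  set g : ℝ → ℝ := fun v => ‖deriv X v‖ ^ 2 with hg
  have hall : ∀ u : ℝ, 0 < u → 0 < deriv g u := by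
    intro u hu
    obtain ⟨s, hsS, hus⟩ := hbdd u
    exact hsS.2 u ⟨hu, hus⟩
  have hgc : ContinuousOn g (Set.Ioi 0) := by
    have := ((derivX_contOn hX2).continuousOn (𝕜 := ℝ)).norm
    exact this.pow 2
  have hgd : ∀ u ∈ Set.Ioi (0:ℝ), HasDerivAt g (deriv g u) u := fun u hu =>
    ((speed_hasDeriv hX2 hu).congr_deriv (speed_hasDeriv hX2 hu).deriv.symm)
  have hmono : StrictMonoOn g (Set.Ioi 0) := by
    apply strictMonoOn_of_deriv_pos (convex_Ioi 0) hgc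
    rw [interior_Ioi]
    exact fun u hu => hall u hu
  have hg1 : 0 < g 1 := by
    have h12 : (1/2 : ℝ) ∈ Set.Ioi (0:ℝ) := by norm_num
    have := hmono h12 (by norm_num : (1:ℝ) ∈ Set.Ioi (0:ℝ)) (by norm_num)
    have hnn : 0 ≤ g (1/2) := by rw [hg]; positivity
    linarith
  -- the Lyapunov-like function
  set F : ℝ → ℝ := fun s => (f (X s) + (1/2) * g s) + (3 * g 1) * Real.log s with hF
  have hFd : ∀ s : ℝ, 0 < s → HasDerivAt F (-(3/s) * g s + (3 * g 1) * (1/s)) s := by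
    intro s hs
    have h1 := energy_hasDeriv hf hX2 hODE hs
    have h2 := (Real.hasDerivAt_log hs.ne').const_mul (3 * g 1)
    have := h1.add h2
    refine this.congr_deriv ?_
    simp only [hg]
    ring
  have hanti : AntitoneOn F (Set.Ici 1) := by
    apply antitoneOn_of_deriv_nonpos (convex_Ici 1)
    · intro s hs
      have hs0 : (0:ℝ) < s := lt_of_lt_of_le one_pos hs
      exact ((hFd s hs0).continuousAt).continuousWithinAt
    · rw [interior_Ici]
      intro s hs
      have hs0 : (0:ℝ) < s := lt_trans one_pos hs
      exact ((hFd s hs0).differentiableAt).differentiableWithinAt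
    · rw [interior_Ici]
      intro s hs
      have hs0 : (0:ℝ) < s := lt_trans one_pos hs
      rw [(hFd s hs0).deriv]
      have hgs : g 1 ≤ g s := (hmono (by norm_num) hs0 hs).le
      have : -(3/s) * g s + (3 * g 1) * (1/s) = (3/s) * (g 1 - g s) := by ring
      rw [this]
      apply mul_nonpos_of_nonneg_of_nonpos (by positivity)
      linarith
  exfalso
  set B := F 1 with hB
  have hBlog : Real.log 1 = 0 := Real.log_one
  set s0 := Real.exp ((B - f xstar)/(3 * g 1) + 1) with hs0
  have hgap : 0 ≤ B - f xstar := by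
    have h1 : f xstar ≤ f (X 1) := hmin (Set.mem_univ _)
    have h2 : 0 ≤ g 1 := hg1.le
    rw [hB, hF]
    simp only [hBlog]
    nlinarith
  have hs01 : 1 ≤ s0 := by
    rw [hs0, show (1:ℝ) = Real.exp 0 by simp]
    apply Real.exp_le_exp.2
    positivity
  have hFs0 : F s0 ≤ B := hanti (by norm_num) hs01 hs01
  have hlog : Real.log s0 = (B - f xstar)/(3 * g 1) + 1 := Real.log_exp _
  have hmin0 : f xstar ≤ f (X s0) := hmin (Set.mem_univ _)
  have hgnn : 0 ≤ g s0 := by rw [hg]; positivity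
  rw [hF] at hFs0
  simp only [hlog] at hFs0
  have h3g : 0 < 3 * g 1 := by linarith
  have hfrac : (3 * g 1) * ((B - f xstar)/(3 * g 1) + 1) = (B - f xstar) + 3 * g 1 := by
    field_simp
  nlinarith [hFs0, hfrac]

end T

/-- **Lemma (constant decay per restart).** There is a universal constant `C > 0` such that
for every `f ∈ S_{μ,L}` and `x₀ ≠ x⋆`, the Nesterov ODE solution satisfies
`f(X(T)) - f⋆ ≤ (1 - Cμ/L)(f(x₀) - f⋆)` at the speed restarting time `T`. -/
theorem speed_restart_decay :
    ∃ C > (0:ℝ), ∀ (n : ℕ) (μ L : ℝ), 0 < μ → μ ≤ L →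
      ∀ f : E n → ℝ, MemS n μ L f →
      ∀ xstar : E n, IsMinOn f Set.univ xstar →
      ∀ x0 : E n, x0 ≠ xstar →
      ∀ X : ℝ → E n, NesterovSol n f x0 X →
        f (X (SpeedRestartTime n X)) - f xstar ≤
          (1 - C * μ / L) * (f x0 - f xstar) := by
  refine ⟨1/45, by norm_num, ?_⟩
  intro n μ L hμ hμL f hfS xstar hmin x0 hne X hX
  obtain ⟨⟨hconv, hdiff, hLip⟩, hsconv⟩ := hfS
  obtain ⟨hX0, hX1, hX2, hXd0, hODE⟩ := hX
  have hL : 0 < L := lt_of_lt_of_le hμ hμL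
  have hGne : gradient f x0 ≠ 0 := grad_ne_zero hμ hdiff hsconv hmin hne
  have hGpos : 0 < ‖gradient f x0‖ := norm_pos_iff.2 hGne
  set t0 : ℝ := 1/(3*Real.sqrt L) with ht0def
  have hsL : 0 < Real.sqrt L := Real.sqrt_pos.2 hL
  have ht0 : 0 < t0 := by rw [ht0def]; positivity
  have ht0sq : t0^2 = 1/(9*L) := by
    rw [ht0def, div_pow, mul_pow, Real.sq_sqrt hL.le]
    norm_num
  have hκ0 : L * t0^2 = 1/9 := by rw [ht0sq]; field_simp
  set Sset := {t : ℝ | 0 < t ∧ ∀ u ∈ Set.Ioo (0:ℝ) t,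
    0 < deriv (fun v => ‖deriv X v‖ ^ 2) u} with hSset
  have hbdd : BddAbove Sset := S_bddAbove hdiff hX1 hX2 hODE hmin
  have ht0S : t0 ∈ Sset := by
    refine ⟨ht0, fun u hu => ?_⟩
    have hκu : L * u^2 ≤ 1/9 := by
      have hsq : u^2 ≤ t0^2 := pow_le_pow_left₀ hu.1.le hu.2.le 2
      nlinarith [mul_le_mul_of_nonneg_left hsq hL.le]
    exact speed_deriv_pos hdiff hLip hX0 hX1 hX2 hXd0 hODE hL.le hGne hu.1 hκu
  have hSne : Sset.Nonempty := ⟨t0, ht0S⟩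
  have hTs : SpeedRestartTime n X = sSup Sset := rfl
  set T := SpeedRestartTime n X with hT
  have ht0T : t0 ≤ T := by rw [hTs]; exact le_csSup hbdd ht0S
  have hTpos : 0 < T := lt_of_lt_of_le ht0 ht0T
  have hposT : ∀ u ∈ Set.Ioo (0:ℝ) T, 0 < deriv (fun v => ‖deriv X v‖ ^ 2) u := by
    intro u hu
    have huT : u < sSup Sset := by rw [← hTs]; exact hu.2
    obtain ⟨s, hsS, hus⟩ := exists_lt_of_lt_csSup hSne huT
    exact hsS.2 u ⟨hu.1, hus⟩
  have hanti : AntitoneOn (fun s => f (X s)) (Set.Icc t0 T) := by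
    apply antitoneOn_of_deriv_nonpos (convex_Icc t0 T)
    · exact hdiff.continuous.comp_continuousOn
        (hX1.continuousOn.mono (fun s hs => le_trans ht0.le hs.1))
    · rw [interior_Icc]
      intro s hs
      exact ((fX_hasDeriv hdiff hX2 (lt_trans ht0 hs.1)).differentiableAt).differentiableWithinAt
    · rw [interior_Icc]
      intro s hs
      have hs0 : 0 < s := lt_trans ht0 hs.1
      rw [(fX_hasDeriv hdiff hX2 hs0).deriv]
      have hgd : deriv (fun v => ‖deriv X v‖ ^ 2) s
          = 2*⟪deriv X s, deriv (deriv X) s⟫ := (speed_hasDeriv hX2 hs0).deriv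
      have hODEs : deriv (deriv X) s = -((3/s) • deriv X s) - gradient f (X s) := by
        have h4 := hODE s hs0
        rw [eq_sub_iff_add_eq, eq_neg_iff_add_eq_zero, add_right_comm]
        exact h4
      have hgpos := hposT s ⟨hs0, hs.2⟩
      rw [hODEs, inner_sub_right, inner_neg_right, inner_smul_right,
        real_inner_self_eq_norm_sq] at hgd
      have hnn : 0 ≤ (3/s) * ‖deriv X s‖^2 := by positivity
      have hcm : ⟪gradient f (X s), deriv X s⟫ = ⟪deriv X s, gradient f (X s)⟫ :=
        real_inner_comm _ _
      rw [hcm]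
      linarith [hgpos, hgd]
  have h1 : f (X T) ≤ f (X t0) := hanti ⟨le_rfl, ht0T⟩ ⟨ht0T, le_rfl⟩ ht0T
  have h2 := f_decrease hdiff hLip hX0 hX1 hX2 hXd0 hODE hL.le ht0 hκ0.le
  have h3 := PL_ineq hμ hdiff hsconv hmin x0
  have hgap : 0 ≤ f x0 - f xstar := sub_nonneg.2 (hmin (mem_univ x0))
  have ht02 : -(t0^2/10) = -(1/(90*L)) := by rw [ht0sq]; field_simp; ring
  rw [ht02] at h2
  have h5 : (1/(90*L)) * (2*μ*(f x0 - f xstar)) ≤ (1/(90*L)) * ‖gradient f x0‖^2 :=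
    mul_le_mul_of_nonneg_left h3 (by positivity)
  have heq : (f x0 - f xstar) - (1/(90*L))*(2*μ*(f x0 - f xstar))
      = (1 - (1/45) * μ / L) * (f x0 - f xstar) := by
    field_simp
    ring
  nlinarith [h1, h2, h5, heq]
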